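/- Let U_V and U_W be unitary operators on a finite-dimensional complex Hilbert space, P an orthogonal projection, and ρ a density operator (positive semidefinite with trace 1) whose support lies in the range of P, i.e., P ρ P = ρ. Then (1/2)·‖U_V ρ U_V† − U_W ρ U_W†‖₁ ≤ ‖U_V P − U_W P‖, where ‖·‖₁ is the trace norm and ‖·‖ the operator norm. -/

import Mathlib

set_option synthInstance.maxHeartbeats 1000000
set_option maxHeartbeats 1000000

open scoped Matrix ComplexOrder

/-- The trace norm of a complex matrix: the trace of the positive semidefinite
square root of `Mᴴ M`. -/
noncomputable def traceNorm {m : Type} [Fintype m] [DecidableEq m]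
    (M : Matrix m m ℂ) : ℝ :=
  ((Matrix.posSemidef_conjTranspose_mul_self M).1.eigenvectorUnitary.1 *
    Matrix.diagonal (((↑) : ℝ → ℂ) ∘ Real.sqrt ∘ (Matrix.posSemidef_conjTranspose_mul_self M).1.eigenvalues) *
    (star (Matrix.posSemidef_conjTranspose_mul_self M).1.eigenvectorUnitary :
      Matrix m m ℂ)).trace.re

/-- The operator (spectral) norm of a complex matrix. -/
noncomputable def opNorm {m : Type} [Fintype m] [DecidableEq m]
    (M : Matrix m m ℂ) : ℝ :=
  ‖Matrix.toEuclideanCLM (𝕜 := ℂ) M‖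

section Aux

variable {m : Type} [Fintype m] [DecidableEq m]

lemma opNorm_nonneg (A : Matrix m m ℂ) : 0 ≤ opNorm A := norm_nonneg _

lemma opNorm_mul_le (A B : Matrix m m ℂ) : opNorm (A * B) ≤ opNorm A * opNorm B := by
  unfold opNorm; rw [map_mul]; exact norm_mul_le _ _

lemma opNorm_conjTranspose (A : Matrix m m ℂ) : opNorm Aᴴ = opNorm A := by
  unfold opNorm
  rw [← Matrix.star_eq_conjTranspose, map_star, ContinuousLinearMap.star_eq_adjoint]
  exact LinearIsometryEquiv.norm_map (ContinuousLinearMap.adjoint) _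

lemma opNorm_le_one_of_unitary {A : Matrix m m ℂ} (h : Aᴴ * A = 1) : opNorm A ≤ 1 := by
  have h1 : star (Matrix.toEuclideanCLM (𝕜 := ℂ) A) * Matrix.toEuclideanCLM (𝕜 := ℂ) A = 1 := by
    rw [← map_star, ← map_mul, Matrix.star_eq_conjTranspose, h, map_one]
  have h2 := CStarRing.norm_star_mul_self (x := Matrix.toEuclideanCLM (𝕜 := ℂ) A)
  rw [h1] at h2
  have h3 : ‖(1 : EuclideanSpace ℂ m →L[ℂ] EuclideanSpace ℂ m)‖ ≤ 1 := by
    rw [ContinuousLinearMap.one_def]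
    exact ContinuousLinearMap.norm_id_le
  unfold opNorm
  nlinarith [norm_nonneg (Matrix.toEuclideanCLM (𝕜 := ℂ) A)]

lemma opNorm_le_one_of_proj {A : Matrix m m ℂ} (hH : Aᴴ = A) (h : A * A = A) : opNorm A ≤ 1 := by
  have h1 : star (Matrix.toEuclideanCLM (𝕜 := ℂ) A) * Matrix.toEuclideanCLM (𝕜 := ℂ) A
      = Matrix.toEuclideanCLM (𝕜 := ℂ) A := by
    rw [← map_star, ← map_mul, Matrix.star_eq_conjTranspose, hH, h]
  have h2 := CStarRing.norm_star_mul_self (x := Matrix.toEuclideanCLM (𝕜 := ℂ) A)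
  rw [h1] at h2
  unfold opNorm
  nlinarith [norm_nonneg (Matrix.toEuclideanCLM (𝕜 := ℂ) A)]

/-- For a positive semidefinite `ρ` and any matrix `M`,
`Re tr(M ρ) ≤ ‖M‖ · Re tr(ρ)`. -/
lemma re_trace_mul_le {ρ : Matrix m m ℂ} (hρ : ρ.PosSemidef) (M : Matrix m m ℂ) :
    ((M * ρ).trace).re ≤ opNorm M * ρ.trace.re := by
  obtain ⟨S, hSH, hSS⟩ : ∃ S : Matrix m m ℂ, Sᴴ = S ∧ S * S = ρ :=
    by open scoped MatrixOrder in
      exact ⟨CFC.sqrt ρ, (Matrix.nonneg_iff_posSemidef.mp (CFC.sqrt_nonneg ρ)).1, CFC.sqrt_mul_sqrt_self ρ hρ.nonneg⟩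
  have hS' : ∀ a b, (starRingEnd ℂ) (S a b) = S b a := by
    intro a b
    conv_rhs => rw [← hSH]
    rw [Matrix.conjTranspose_apply, RCLike.star_def]
  set T := Matrix.toEuclideanCLM (𝕜 := ℂ) M with hT
  set c : m → EuclideanSpace ℂ m := fun i => (WithLp.equiv 2 (m → ℂ)).symm (fun j => S j i)
    with hc
  have key : ∀ i, (S * (M * S)) i i = inner ℂ (c i) (T (c i)) := by
    intro i
    simp only [hc, hT, WithLp.equiv_symm_apply, Matrix.toEuclideanCLM_toLp, Matrix.toLin'_apply,
      PiLp.inner_apply, RCLike.inner_apply', PiLp.toLp_apply, hS',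
      Matrix.mul_apply, Matrix.mulVec, dotProduct, Finset.mul_sum, Finset.sum_mul]
  have hinner_self : ∀ i, ((inner ℂ (c i) (c i) : ℂ)) = ρ i i := by
    intro i
    simp only [hc, WithLp.equiv_symm_apply, PiLp.inner_apply, RCLike.inner_apply', PiLp.toLp_apply,
      hS', ← hSS, Matrix.mul_apply]
  have hnorm_sq : ∀ i, (ρ i i).re = ‖c i‖ ^ 2 := by
    intro i
    rw [← inner_self_eq_norm_sq (𝕜 := ℂ), hinner_self i]; rfl
  have tr_eq : (M * ρ).trace = (S * (M * S)).trace := by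
    conv_lhs => rw [← hSS, ← mul_assoc, Matrix.trace_mul_comm]
  calc ((M * ρ).trace).re = ∑ i, ((S * (M * S)) i i).re := by
        rw [tr_eq]; rw [Matrix.trace]; rw [Complex.re_sum]; rfl
    _ ≤ ∑ i, opNorm M * (ρ i i).re := by
        refine Finset.sum_le_sum fun i _ => ?_
        rw [key i, hnorm_sq i]
        calc (inner ℂ (c i) (T (c i)) : ℂ).re ≤ ‖(inner ℂ (c i) (T (c i)) : ℂ)‖ :=
              Complex.re_le_norm _
          _ ≤ ‖c i‖ * ‖T (c i)‖ := norm_inner_le_norm _ _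
          _ ≤ ‖c i‖ * (‖T‖ * ‖c i‖) := by
              have h1 := T.le_opNorm (c i)
              nlinarith [norm_nonneg (c i)]
          _ = opNorm M * ‖c i‖ ^ 2 := by rw [opNorm, ← hT]; ring
    _ = opNorm M * ρ.trace.re := by
        rw [Matrix.trace, Complex.re_sum, Finset.mul_sum]; rfl

/-- For a Hermitian matrix `A` there is a unitary matrix `E` with
`Re tr(E A) = ‖A‖₁`. -/
lemma exists_dual_unitary {A : Matrix m m ℂ} (hA : A.IsHermitian) :
    ∃ E : Matrix m m ℂ, Eᴴ * E = 1 ∧ ((E * A).trace).re = traceNorm A := by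
  set V : Matrix m m ℂ := ↑hA.eigenvectorUnitary with hVdef
  set l := hA.eigenvalues with hldef
  have hV1 : Vᴴ * V = 1 := by
    rw [← Matrix.star_eq_conjTranspose]
    exact hA.eigenvectorUnitary.2.1
  have hV2 : V * Vᴴ = 1 := by
    rw [← Matrix.star_eq_conjTranspose]
    exact hA.eigenvectorUnitary.2.2
  have hspec : A = V * Matrix.diagonal (fun i => ((l i : ℝ) : ℂ)) * Vᴴ := by
    rw [← Matrix.star_eq_conjTranspose]
    exact hA.spectral_theorem
  have hmul : ∀ X Y : Matrix m m ℂ,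
      (V * X * Vᴴ) * (V * Y * Vᴴ) = V * (X * Y) * Vᴴ := by
    intro X Y
    calc (V * X * Vᴴ) * (V * Y * Vᴴ) = V * X * (Vᴴ * V) * Y * Vᴴ := by
          simp only [mul_assoc]
      _ = V * (X * Y) * Vᴴ := by rw [hV1]; simp only [mul_one, mul_assoc]
  have htr : ∀ X : Matrix m m ℂ, (V * X * Vᴴ).trace = X.trace := by
    intro X
    rw [Matrix.trace_mul_comm, ← mul_assoc, hV1, one_mul]
  set s : m → ℂ := fun i => if 0 ≤ l i then 1 else -1 with hsdef
  set E : Matrix m m ℂ := V * Matrix.diagonal s * Vᴴ with hEdef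
  have hEH : Eᴴ = E := by
    rw [hEdef, Matrix.conjTranspose_mul, Matrix.conjTranspose_mul,
      Matrix.conjTranspose_conjTranspose, Matrix.diagonal_conjTranspose]
    have : star s = s := by
      funext i
      simp only [Pi.star_apply, hsdef]
      split <;> simp
    rw [this, mul_assoc]
  have hss : (fun i => s i * s i) = (1 : m → ℂ) := by
    funext i
    simp only [hsdef, Pi.one_apply]
    split <;> norm_num
  refine ⟨E, ?_, ?_⟩
  · rw [hEH, hEdef, hmul, Matrix.diagonal_mul_diagonal, hss]
    rw [show Matrix.diagonal (1 : m → ℂ) = 1 from Matrix.diagonal_one, mul_one, hV2]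
  · -- trace part
    have hEA : E * A = V * (Matrix.diagonal s * Matrix.diagonal (fun i => ((l i : ℝ) : ℂ)))
        * Vᴴ := by
      conv_lhs => rw [hEdef, hspec, hmul]
    have htrEA : ((E * A).trace).re = ∑ i, |l i| := by
      rw [hEA, htr, Matrix.diagonal_mul_diagonal, Matrix.trace_diagonal, Complex.re_sum]
      refine Finset.sum_congr rfl fun i _ => ?_
      simp only [hsdef, Pi.mul_apply]
      split
      · next h => simp [abs_of_nonneg h]
      · next h =>
          rw [abs_of_neg (lt_of_not_ge h)]
          simp
    -- traceNorm part
    set d : m → ℂ := fun i => ((|l i| : ℝ) : ℂ) with hddef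
    set r : m → ℂ := fun i => ((Real.sqrt |l i| : ℝ) : ℂ) with hrdef
    have hrr : (fun i => r i * r i) = d := by
      funext i
      simp only [hrdef, hddef, ← Complex.ofReal_mul,
        Real.mul_self_sqrt (abs_nonneg _)]
    have hB : Matrix.PosSemidef (V * Matrix.diagonal d * Vᴴ) := by
      have heq : V * Matrix.diagonal d * Vᴴ =
          (Matrix.diagonal r * Vᴴ)ᴴ * (Matrix.diagonal r * Vᴴ) := by
        rw [Matrix.conjTranspose_mul, Matrix.conjTranspose_conjTranspose,
          Matrix.diagonal_conjTranspose]
        have hstar : star r = r := by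
          funext i
          simp [hrdef, Pi.star_apply, Complex.star_def, Complex.conj_ofReal]
        rw [hstar]
        calc V * Matrix.diagonal d * Vᴴ
            = V * (Matrix.diagonal r * Matrix.diagonal r) * Vᴴ := by
              rw [Matrix.diagonal_mul_diagonal, hrr]
          _ = V * Matrix.diagonal r * (Matrix.diagonal r * Vᴴ) := by
              simp only [mul_assoc]
      rw [heq]
      exact Matrix.posSemidef_conjTranspose_mul_self _
    have hdd : (fun i => d i * d i) = (fun i => ((l i : ℝ) : ℂ) * ((l i : ℝ) : ℂ)) := by
      funext i
      simp only [hddef, ← Complex.ofReal_mul, abs_mul_abs_self]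
    have hBsq : (V * Matrix.diagonal d * Vᴴ) ^ 2 = Aᴴ * A := by
      rw [pow_two, hmul, Matrix.diagonal_mul_diagonal, hA.eq]
      conv_rhs => rw [hspec, hmul, Matrix.diagonal_mul_diagonal]
      rw [hdd]
    have hsqrt : V * Matrix.diagonal d * Vᴴ =
        (Matrix.posSemidef_conjTranspose_mul_self A).1.eigenvectorUnitary.1 *
        Matrix.diagonal (((↑) : ℝ → ℂ) ∘ Real.sqrt ∘
          (Matrix.posSemidef_conjTranspose_mul_self A).1.eigenvalues) *
        (star (Matrix.posSemidef_conjTranspose_mul_self A).1.eigenvectorUnitary :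
          Matrix m m ℂ) := by
      open scoped MatrixOrder in
      have hAA := Matrix.posSemidef_conjTranspose_mul_self A
      open scoped MatrixOrder in
      rw [← CFC.sqrt_unique (a := Aᴴ * A) (b := V * Matrix.diagonal d * Vᴴ)
        (by rw [← pow_two, hBsq]) hB.nonneg, CFC.sqrt_eq_real_sqrt _ hAA.nonneg, cfcₙ_eq_cfc (hf0 := Real.sqrt_zero),
        hAA.1.cfc_eq Real.sqrt]
      rfl
    have htn : traceNorm A = ∑ i, |l i| := by
      rw [traceNorm, ← hsqrt, htr, Matrix.trace_diagonal, Complex.re_sum]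
      refine Finset.sum_congr rfl fun i _ => ?_
      simp [hddef]
    rw [htrEA, htn]

end Aux

/-- Trace distance of evolved states vs operator norm of the evolutions: for unitaries
`U_V, U_W`, a projection `P`, and a density operator `ρ` supported in the range of `P`,
`(1/2)‖U_V ρ U_V† - U_W ρ U_W†‖₁ ≤ ‖U_V P - U_W P‖`. -/
theorem trace_dist_le_opNorm
    {n : ℕ}
    (UV UW : Matrix (Fin n) (Fin n) ℂ)
    (hUV1 : UVᴴ * UV = 1) (hUV2 : UV * UVᴴ = 1)
    (hUW1 : UWᴴ * UW = 1) (hUW2 : UW * UWᴴ = 1)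
    (P : Matrix (Fin n) (Fin n) ℂ)
    (hPidem : P * P = P) (hPH : P.IsHermitian)
    (ρ : Matrix (Fin n) (Fin n) ℂ)
    (hρpos : ρ.PosSemidef) (hρtr : ρ.trace = 1)
    (hsupp : P * ρ * P = ρ) :
    (1 / 2) * traceNorm (UV * ρ * UVᴴ - UW * ρ * UWᴴ) ≤ opNorm (UV * P - UW * P) := by
  have hρH : ρᴴ = ρ := hρpos.1
  have hPH' : Pᴴ = P := hPH
  set a : Matrix (Fin n) (Fin n) ℂ := UV * P with hadef
  set b : Matrix (Fin n) (Fin n) ℂ := UW * P with hbdef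
  set D : Matrix (Fin n) (Fin n) ℂ := UV * P - UW * P with hDdef
  -- rewrite the evolved states using the support condition
  have haρ : UV * ρ * UVᴴ = a * ρ * aᴴ := by
    rw [hadef, Matrix.conjTranspose_mul, hPH']
    conv_lhs => rw [← hsupp]
    simp only [mul_assoc]
  have hbρ : UW * ρ * UWᴴ = b * ρ * bᴴ := by
    rw [hbdef, Matrix.conjTranspose_mul, hPH']
    conv_lhs => rw [← hsupp]
    simp only [mul_assoc]
  rw [haρ, hbρ]
  -- the difference is Hermitian
  have hAH : (a * ρ * aᴴ - b * ρ * bᴴ).IsHermitian := by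
    show (a * ρ * aᴴ - b * ρ * bᴴ)ᴴ = _
    simp only [Matrix.conjTranspose_sub, Matrix.conjTranspose_mul,
      Matrix.conjTranspose_conjTranspose, hρH, mul_assoc]
  obtain ⟨E, hE, htrE⟩ := exists_dual_unitary hAH
  have hEnorm : opNorm E ≤ 1 := opNorm_le_one_of_unitary hE
  -- norms of the pieces
  have hPnorm : opNorm P ≤ 1 := opNorm_le_one_of_proj hPH' hPidem
  have hUVH : opNorm UVᴴ ≤ 1 := by
    refine opNorm_le_one_of_unitary ?_
    rw [Matrix.conjTranspose_conjTranspose, hUV2]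
  have hUWH : opNorm UWᴴ ≤ 1 := by
    refine opNorm_le_one_of_unitary ?_
    rw [Matrix.conjTranspose_conjTranspose, hUW2]
  have haH : opNorm aᴴ ≤ 1 := by
    rw [hadef, Matrix.conjTranspose_mul, hPH']
    calc opNorm (P * UVᴴ) ≤ opNorm P * opNorm UVᴴ := opNorm_mul_le _ _
      _ ≤ 1 := by nlinarith [opNorm_nonneg P, opNorm_nonneg UVᴴ]
  have hbnorm : opNorm b ≤ 1 := by
    rw [hbdef]
    calc opNorm (UW * P) ≤ opNorm UW * opNorm P := opNorm_mul_le _ _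
      _ ≤ 1 := by
          have hUW : opNorm UW ≤ 1 := opNorm_le_one_of_unitary hUW1
          nlinarith [opNorm_nonneg UW, opNorm_nonneg P]
  have hDH : opNorm Dᴴ = opNorm D := opNorm_conjTranspose D
  have hρre : ρ.trace.re = 1 := by rw [hρtr]; rfl
  -- decomposition
  have hdecomp : a * ρ * aᴴ - b * ρ * bᴴ = D * ρ * aᴴ + b * ρ * Dᴴ := by
    rw [hDdef, ← hadef, ← hbdef, Matrix.conjTranspose_sub]
    noncomm_ring
  -- bound each piece
  have h1 : ((E * (D * ρ * aᴴ)).trace).re ≤ opNorm D := by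
    have htr1 : (E * (D * ρ * aᴴ)).trace = ((aᴴ * (E * D)) * ρ).trace := by
      calc (E * (D * ρ * aᴴ)).trace = (((E * D) * ρ) * aᴴ).trace := by
            simp only [mul_assoc]
        _ = (aᴴ * ((E * D) * ρ)).trace := Matrix.trace_mul_comm _ _
        _ = ((aᴴ * (E * D)) * ρ).trace := by simp only [mul_assoc]
    rw [htr1]
    calc (((aᴴ * (E * D)) * ρ).trace).re ≤ opNorm (aᴴ * (E * D)) * ρ.trace.re :=
          re_trace_mul_le hρpos _
      _ = opNorm (aᴴ * (E * D)) := by rw [hρre, mul_one]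
      _ ≤ opNorm D := by
          have k1 := opNorm_mul_le aᴴ (E * D)
          have k2 := opNorm_mul_le E D
          nlinarith [opNorm_nonneg aᴴ, opNorm_nonneg E, opNorm_nonneg D,
            opNorm_nonneg (E * D), opNorm_nonneg (aᴴ * (E * D))]
  have h2 : ((E * (b * ρ * Dᴴ)).trace).re ≤ opNorm D := by
    have htr2 : (E * (b * ρ * Dᴴ)).trace = ((Dᴴ * (E * b)) * ρ).trace := by
      calc (E * (b * ρ * Dᴴ)).trace = (((E * b) * ρ) * Dᴴ).trace := by
            simp only [mul_assoc]
        _ = (Dᴴ * ((E * b) * ρ)).trace := Matrix.trace_mul_comm _ _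
        _ = ((Dᴴ * (E * b)) * ρ).trace := by simp only [mul_assoc]
    rw [htr2]
    calc (((Dᴴ * (E * b)) * ρ).trace).re ≤ opNorm (Dᴴ * (E * b)) * ρ.trace.re :=
          re_trace_mul_le hρpos _
      _ = opNorm (Dᴴ * (E * b)) := by rw [hρre, mul_one]
      _ ≤ opNorm D := by
          have k1 := opNorm_mul_le Dᴴ (E * b)
          have k2 := opNorm_mul_le E b
          rw [hDH] at k1
          have k3 : opNorm (E * b) ≤ 1 := by
            nlinarith [opNorm_nonneg E, opNorm_nonneg b]
          calc opNorm (Dᴴ * (E * b)) ≤ opNorm D * opNorm (E * b) := k1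
            _ ≤ opNorm D * 1 := mul_le_mul_of_nonneg_left k3 (opNorm_nonneg D)
            _ = opNorm D := mul_one _
  -- assemble
  have hsplit : ((E * (a * ρ * aᴴ - b * ρ * bᴴ)).trace).re
      = ((E * (D * ρ * aᴴ)).trace).re + ((E * (b * ρ * Dᴴ)).trace).re := by
    rw [hdecomp, mul_add, Matrix.trace_add, Complex.add_re]
  have : traceNorm (a * ρ * aᴴ - b * ρ * bᴴ) ≤ 2 * opNorm D := by
    rw [← htrE, hsplit]
    linarith
  linarith
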